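/- For every v ∈ (0, π), the phase-fitted method PF-D0 integrates the complex exponential exactly: ∑_{j=0}^{12} (a_j + v²·B_j(v))·exp(i·j·v) = 0, where B_0 = B_12 = 0, B_1 = B_11 = b1(v), B_2 = B_10 = b2(v), B_3 = B_9 = b3(v), B_4 = B_8 = b4(v), B_5 = B_7 = b5(v), B_6 = b6(v). -/

import Mathlib

open Finset

/-- The `a`-coefficients of the Quinlan–Tremaine 12-step method. -/
def qtA : ℕ → ℝ
  | 0 => 1
  | 1 => -2
  | 2 => 2
  | 3 => -1
  | 9 => -1
  | 10 => 2
  | 11 => -2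
  | 12 => 1
  | _ => 0

/-- The `b`-coefficients of the Quinlan–Tremaine 12-step method. -/
noncomputable def qtB : ℕ → ℝ
  | 1 => 90987349 / 53222400
  | 2 => -114798419 / 26611200
  | 3 => 270875723 / 17740800
  | 4 => -67855831 / 2217600
  | 5 => 50277247 / 985600
  | 6 => -253491379 / 4435200
  | 7 => 50277247 / 985600
  | 8 => -67855831 / 2217600
  | 9 => 270875723 / 17740800
  | 10 => -114798419 / 26611200
  | 11 => 90987349 / 53222400
  | _ => 0

/-- The variable coefficient `b₁(v)` of the phase-fitted method PF-D0. -/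
noncomputable def pfb1 (v : ℝ) : ℝ :=
  (((-124184636) * Real.cos v + 70378348 * Real.cos (2 * v) - 24862148 * Real.cos (3 * v)
        + 5153611 * Real.cos (4 * v)) * v ^ 2
      + 25 * (3013169 * v ^ 2 - 16128 * Real.cos (3 * v) + 32256 * Real.cos (4 * v)
        - 32256 * Real.cos (5 * v) + 16128 * Real.cos (6 * v)))
    / (206438400 * v ^ 2 * (Real.sin (v / 2)) ^ 10)

/-- The variable coefficient `b₂(v)` of the phase-fitted method PF-D0. -/
noncomputable def pfb2 (v : ℝ) : ℝ :=
  (v ^ 2 * (159588050 * Real.cos v - 85350160 * Real.cos (2 * v)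
        + 16708985 * Real.cos (3 * v) - 5153611 * Real.cos (5 * v))
      - 16 * (6496079 * v ^ 2 - 252000 * Real.cos (3 * v) + 504000 * Real.cos (4 * v)
        - 504000 * Real.cos (5 * v) + 252000 * Real.cos (6 * v)))
    / (206438400 * v ^ 2 * (Real.sin (v / 2)) ^ 10)

/-- The variable coefficient `b₃(v)` of the phase-fitted method PF-D0. -/
noncomputable def pfb3 (v : ℝ) : ℝ :=
  (((-367257540) * Real.cos v + 183567900 * Real.cos (2 * v)
        - 16708985 * Real.cos (4 * v) + 24862148 * Real.cos (5 * v)) * v ^ 2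
      + 81 * (3175117 * v ^ 2 - 224000 * Real.cos (3 * v) + 448000 * Real.cos (4 * v)
        - 448000 * Real.cos (5 * v) + 224000 * Real.cos (6 * v)))
    / (206438400 * v ^ 2 * (Real.sin (v / 2)) ^ 10)

/-- The variable coefficient `b₄(v)` of the phase-fitted method PF-D0. -/
noncomputable def pfb4 (v : ℝ) : ℝ :=
  (30675810 * v ^ 2 * Real.cos v - 42958788 * v ^ 2
      + 75 * (161280 - 611893 * v ^ 2) * Real.cos (3 * v)
      + 140 * (152411 * v ^ 2 - 172800) * Real.cos (4 * v)
      + (24192000 - 17594587 * v ^ 2) * Real.cos (5 * v)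
      - 12096000 * Real.cos (6 * v))
    / (51609600 * v ^ 2 * (Real.sin (v / 2)) ^ 10)

/-- The variable coefficient `b₅(v)` of the phase-fitted method PF-D0. -/
noncomputable def pfb5 (v : ℝ) : ℝ :=
  ((-61351620) * v ^ 2 * Real.cos (2 * v) + 85936557 * v ^ 2
      + 30 * (6120959 * v ^ 2 - 1411200) * Real.cos (3 * v)
      + 25 * (3386880 - 3191761 * v ^ 2) * Real.cos (4 * v)
      + (62092318 * v ^ 2 - 84672000) * Real.cos (5 * v)
      + 42336000 * Real.cos (6 * v))
    / (103219200 * v ^ 2 * (Real.sin (v / 2)) ^ 10)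

/-- The variable coefficient `b₆(v)` of the phase-fitted method PF-D0. -/
noncomputable def pfb6 (v : ℝ) : ℝ :=
  (((-171873114) * Real.cos v + 171835152 * Real.cos (2 * v)
        - 257184477 * Real.cos (3 * v) + 103937264 * Real.cos (4 * v)
        - 75329225 * Real.cos (5 * v)) * v ^ 2
      + 50803200 * (Real.cos (3 * v) - 2 * Real.cos (4 * v)
        + 2 * Real.cos (5 * v) - Real.cos (6 * v)))
    / (103219200 * v ^ 2 * (Real.sin (v / 2)) ^ 10)

/-- The symmetric arrangement of the PF-D0 variable coefficients:
`B_0 = B_12 = 0`, `B_1 = B_11 = b₁`, ..., `B_6 = b₆`. -/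
noncomputable def pfB : ℕ → ℝ → ℝ
  | 1, v => pfb1 v
  | 2, v => pfb2 v
  | 3, v => pfb3 v
  | 4, v => pfb4 v
  | 5, v => pfb5 v
  | 6, v => pfb6 v
  | 7, v => pfb5 v
  | 8, v => pfb4 v
  | 9, v => pfb3 v
  | 10, v => pfb2 v
  | 11, v => pfb1 v
  | _, _ => 0

set_option maxHeartbeats 40000000 in
/-- The phase-fitted method PF-D0 integrates the complex exponential
`exp(i·v·x)` exactly: `z = exp(i·v)` is a root of its characteristic polynomial. -/
theorem pfd0_integrates_exponential_exactly :
    ∀ v ∈ Set.Ioo (0 : ℝ) Real.pi,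
      ∑ j ∈ range 13, ((qtA j : ℂ) + (v : ℂ) ^ 2 * (pfB j v : ℂ))
          * Complex.exp (Complex.I * (j : ℂ) * (v : ℂ)) = 0 := by
  rintro v ⟨hv0, hvpi⟩
  have hvne : (v : ℂ) ≠ 0 := by exact_mod_cast hv0.ne'
  have hsne : Real.sin (v / 2) ≠ 0 :=
    ne_of_gt (Real.sin_pos_of_pos_of_lt_pi (by linarith) (by linarith [Real.pi_pos]))
  set e : ℂ := Complex.exp ((v : ℂ) * Complex.I) with he_def
  set f : ℂ := Complex.exp (-(v : ℂ) * Complex.I) with hf_def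
  have hef : e * f = 1 := by
    rw [he_def, hf_def, ← Complex.exp_add]
    norm_num
  have hexp : ∀ k : ℕ, Complex.exp (Complex.I * (k : ℂ) * (v : ℂ)) = e ^ k := by
    intro k
    rw [he_def, ← Complex.exp_nat_mul]
    ring_nf
  have hcosC : ∀ k : ℕ, Complex.cos ((k : ℂ) * (v : ℂ)) = (e ^ k + f ^ k) / 2 := by
    intro k
    show (Complex.exp (((k : ℂ) * v) * Complex.I)
        + Complex.exp ((-((k : ℂ) * v)) * Complex.I)) / 2 = _
    rw [show ((k : ℂ) * v) * Complex.I = (k : ℂ) * ((v : ℂ) * Complex.I) by ring,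
      show (-((k : ℂ) * v)) * Complex.I = (k : ℂ) * (-(v : ℂ) * Complex.I) by ring,
      Complex.exp_nat_mul, Complex.exp_nat_mul, he_def, hf_def]
  have hcos1 : (Real.cos v : ℂ) = (e + f) / 2 := by
    have := hcosC 1
    rw [Complex.ofReal_cos]
    simpa using this
  have hc2 : Complex.cos (2 * (v : ℂ)) = (e ^ 2 + f ^ 2) / 2 := by
    have := hcosC 2; push_cast at this; exact this
  have hc3 : Complex.cos (3 * (v : ℂ)) = (e ^ 3 + f ^ 3) / 2 := by
    have := hcosC 3; push_cast at this; exact this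
  have hc4 : Complex.cos (4 * (v : ℂ)) = (e ^ 4 + f ^ 4) / 2 := by
    have := hcosC 4; push_cast at this; exact this
  have hc5 : Complex.cos (5 * (v : ℂ)) = (e ^ 5 + f ^ 5) / 2 := by
    have := hcosC 5; push_cast at this; exact this
  have hc6 : Complex.cos (6 * (v : ℂ)) = (e ^ 6 + f ^ 6) / 2 := by
    have := hcosC 6; push_cast at this; exact this
  have hsin2 : ((Real.sin (v / 2) : ℂ)) ^ 2 = (2 - e - f) / 4 := by
    have h : Real.sin (v / 2) ^ 2 = 1 / 2 - Real.cos v / 2 := by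
      have := Real.sin_sq_eq_half_sub (v / 2)
      rwa [show 2 * (v / 2) = v by ring] at this
    calc ((Real.sin (v / 2) : ℂ)) ^ 2 = ((Real.sin (v / 2) ^ 2 : ℝ) : ℂ) := by push_cast; ring
      _ = ((1 / 2 - Real.cos v / 2 : ℝ) : ℂ) := by rw [h]
      _ = (2 - e - f) / 4 := by push_cast [hcos1]; ring
  have hsin10 : ((Real.sin (v / 2) : ℂ)) ^ 10 = ((2 - e - f) / 4) ^ 5 := by
    rw [← hsin2]; ring
  have hsin10' : Complex.sin ((v : ℂ) / 2) ^ 10 = ((2 - e - f) / 4) ^ 5 := by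
    push_cast at hsin10; exact hsin10
  have hsinne : ((Real.sin (v / 2) : ℂ)) ≠ 0 := by exact_mod_cast hsne
  have hb2 : (2 : ℂ) - e - f ≠ 0 := by
    intro h
    apply hsinne
    have h2 : ((Real.sin (v / 2) : ℂ)) ^ 2 = 0 := by rw [hsin2, h]; ring
    exact pow_eq_zero_iff (n := 2) (by norm_num) |>.mp h2
  have hbne : (2 - e - f) / 4 ≠ 0 := by
    intro h
    apply hsinne
    have h2 : ((Real.sin (v / 2) : ℂ)) ^ 2 = 0 := by rw [hsin2, h]
    exact pow_eq_zero_iff (n := 2) (by norm_num) |>.mp h2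
  have hC0 : ((qtA 0 : ℂ) + (v : ℂ) ^ 2 * (pfB 0 v : ℂ)) * ((206438400 : ℂ) * (v : ℂ) ^ 2 * ((2 - e - f) / 4) ^ 5) =
      (6451200 : ℂ) * (v : ℂ) ^ 2 + (-16128000 : ℂ) * f ^ 1 * (v : ℂ) ^ 2 + (16128000 : ℂ) * f ^ 2 * (v : ℂ) ^ 2 + (-8064000 : ℂ) * f ^ 3 * (v : ℂ) ^ 2 + (2016000 : ℂ) * f ^ 4 * (v : ℂ) ^ 2 + (-201600 : ℂ) * f ^ 5 * (v : ℂ) ^ 2 + (-16128000 : ℂ) * e ^ 1 * (v : ℂ) ^ 2 + (32256000 : ℂ) * e ^ 1 * f ^ 1 * (v : ℂ) ^ 2 + (-24192000 : ℂ) * e ^ 1 * f ^ 2 * (v : ℂ) ^ 2 + (8064000 : ℂ) * e ^ 1 * f ^ 3 * (v : ℂ) ^ 2 + (-1008000 : ℂ) * e ^ 1 * f ^ 4 * (v : ℂ) ^ 2 + (16128000 : ℂ) * e ^ 2 * (v : ℂ) ^ 2 + (-24192000 : ℂ) * e ^ 2 * f ^ 1 * (v : ℂ) ^ 2 + (12096000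 : ℂ) * e ^ 2 * f ^ 2 * (v : ℂ) ^ 2 + (-2016000 : ℂ) * e ^ 2 * f ^ 3 * (v : ℂ) ^ 2 + (-8064000 : ℂ) * e ^ 3 * (v : ℂ) ^ 2 + (8064000 : ℂ) * e ^ 3 * f ^ 1 * (v : ℂ) ^ 2 + (-2016000 : ℂ) * e ^ 3 * f ^ 2 * (v : ℂ) ^ 2 + (2016000 : ℂ) * e ^ 4 * (v : ℂ) ^ 2 + (-1008000 : ℂ) * e ^ 4 * f ^ 1 * (v : ℂ) ^ 2 + (-201600 : ℂ) * e ^ 5 * (v : ℂ) ^ 2 := by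
    simp only [qtA, pfB]
    push_cast
    ring
  have hC1 : ((qtA 1 : ℂ) + (v : ℂ) ^ 2 * (pfB 1 v : ℂ)) * ((206438400 : ℂ) * (v : ℂ) ^ 2 * ((2 - e - f) / 4) ^ 5) =
      (-12902400 : ℂ) * (v : ℂ) ^ 2 + (75329225 : ℂ) * (v : ℂ) ^ 4 + (32256000 : ℂ) * f ^ 1 * (v : ℂ) ^ 2 + (-62092318 : ℂ) * f ^ 1 * (v : ℂ) ^ 4 + (-32256000 : ℂ) * f ^ 2 * (v : ℂ) ^ 2 + (35189174 : ℂ) * f ^ 2 * (v : ℂ) ^ 4 + (15926400 : ℂ) * f ^ 3 * (v : ℂ) ^ 2 + (-12431074 : ℂ) * f ^ 3 * (v : ℂ) ^ 4 + (-3628800 : ℂ) * f ^ 4 * (v : ℂ) ^ 2 + ((5153611 : ℂ) / 2) * f ^ 4 * (v : ℂ) ^ 4 + (201600 : ℂ) * f ^ 6 * (v : ℂ) ^ 2 + (32256000 : ℂ) * e ^ 1 * (v : ℂ) ^ 2 + (-62092318 : ℂ) * e ^ 1 * (v : ℂ) ^ 4 + (-64512000 : ℂ) * e ^ 1 * f ^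 1 * (v : ℂ) ^ 2 + (48384000 : ℂ) * e ^ 1 * f ^ 2 * (v : ℂ) ^ 2 + (-16128000 : ℂ) * e ^ 1 * f ^ 3 * (v : ℂ) ^ 2 + (2016000 : ℂ) * e ^ 1 * f ^ 4 * (v : ℂ) ^ 2 + (-32256000 : ℂ) * e ^ 2 * (v : ℂ) ^ 2 + (35189174 : ℂ) * e ^ 2 * (v : ℂ) ^ 4 + (48384000 : ℂ) * e ^ 2 * f ^ 1 * (v : ℂ) ^ 2 + (-24192000 : ℂ) * e ^ 2 * f ^ 2 * (v : ℂ) ^ 2 + (4032000 : ℂ) * e ^ 2 * f ^ 3 * (v : ℂ) ^ 2 + (15926400 : ℂ) * e ^ 3 * (v : ℂ) ^ 2 + (-12431074 : ℂ) * e ^ 3 * (v : ℂ) ^ 4 + (-16128000 : ℂ) * e ^ 3 * f ^ 1 * (v : ℂ) ^ 2 + (4032000 : ℂ) * e ^ 3 * f ^ 2 * (v : ℂ) ^ 2 + (-3628800 : ℂ) * e ^ 4 * (v : ℂ) ^ 2 + ((5153611 : ℂ) / 2) * e ^ 4 * (v : ℂ) ^ 4 + (2016000 : ℂ) * e ^ 4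 * f ^ 1 * (v : ℂ) ^ 2 + (201600 : ℂ) * e ^ 6 * (v : ℂ) ^ 2 := by
    simp only [qtA, pfB, pfb1]
    push_cast [hcos1, hc2, hc3, hc4, hc5, hc6, hsin10']
    field_simp [hvne, hb2]
    ring
  have hC2 : ((qtA 2 : ℂ) + (v : ℂ) ^ 2 * (pfB 2 v : ℂ)) * ((206438400 : ℂ) * (v : ℂ) ^ 2 * ((2 - e - f) / 4) ^ 5) =
      (12902400 : ℂ) * (v : ℂ) ^ 2 + (-103937264 : ℂ) * (v : ℂ) ^ 4 + (-32256000 : ℂ) * f ^ 1 * (v : ℂ) ^ 2 + (79794025 : ℂ) * f ^ 1 * (v : ℂ) ^ 4 + (32256000 : ℂ) * f ^ 2 * (v : ℂ) ^ 2 + (-42675080 : ℂ) * f ^ 2 * (v : ℂ) ^ 4 + (-14112000 : ℂ) * f ^ 3 * (v : ℂ) ^ 2 + ((16708985 : ℂ) / 2) * f ^ 3 * (v : ℂ) ^ 4 + (3628800 : ℂ) * f ^ 5 * (v : ℂ) ^ 2 + ((-5153611 : ℂ) / 2) * f ^ 5 * (v : ℂ) ^ 4 + (-2016000 : ℂ)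 * f ^ 6 * (v : ℂ) ^ 2 + (-32256000 : ℂ) * e ^ 1 * (v : ℂ) ^ 2 + (79794025 : ℂ) * e ^ 1 * (v : ℂ) ^ 4 + (64512000 : ℂ) * e ^ 1 * f ^ 1 * (v : ℂ) ^ 2 + (-48384000 : ℂ) * e ^ 1 * f ^ 2 * (v : ℂ) ^ 2 + (16128000 : ℂ) * e ^ 1 * f ^ 3 * (v : ℂ) ^ 2 + (-2016000 : ℂ) * e ^ 1 * f ^ 4 * (v : ℂ) ^ 2 + (32256000 : ℂ) * e ^ 2 * (v : ℂ) ^ 2 + (-42675080 : ℂ) * e ^ 2 * (v : ℂ) ^ 4 + (-48384000 : ℂ) * e ^ 2 * f ^ 1 * (v : ℂ) ^ 2 + (24192000 : ℂ) * e ^ 2 * f ^ 2 * (v : ℂ) ^ 2 + (-4032000 : ℂ) * e ^ 2 * f ^ 3 * (v : ℂ) ^ 2 + (-14112000 : ℂ) * e ^ 3 * (v : ℂ) ^ 2 + ((16708985 : ℂ) / 2) * e ^ 3 * (v : ℂ) ^ 4 + (16128000 : ℂ) * e ^ 3 * f ^ 1 * (v : ℂ) ^ 2 + (-4032000 : ℂ)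 * e ^ 3 * f ^ 2 * (v : ℂ) ^ 2 + (-2016000 : ℂ) * e ^ 4 * f ^ 1 * (v : ℂ) ^ 2 + (3628800 : ℂ) * e ^ 5 * (v : ℂ) ^ 2 + ((-5153611 : ℂ) / 2) * e ^ 5 * (v : ℂ) ^ 4 + (-2016000 : ℂ) * e ^ 6 * (v : ℂ) ^ 2 := by
    simp only [qtA, pfB, pfb2]
    push_cast [hcos1, hc2, hc3, hc4, hc5, hc6, hsin10']
    field_simp [hvne, hb2]
    ring
  have hC3 : ((qtA 3 : ℂ) + (v : ℂ) ^ 2 * (pfB 3 v : ℂ)) * ((206438400 : ℂ) * (v : ℂ) ^ 2 * ((2 - e - f) / 4) ^ 5) =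
      (-6451200 : ℂ) * (v : ℂ) ^ 2 + (257184477 : ℂ) * (v : ℂ) ^ 4 + (16128000 : ℂ) * f ^ 1 * (v : ℂ) ^ 2 + (-183628770 : ℂ) * f ^ 1 * (v : ℂ) ^ 4 + (-16128000 : ℂ) * f ^ 2 * (v : ℂ) ^ 2 + (91783950 : ℂ) * f ^ 2 * (v : ℂ) ^ 4 + (-1008000 : ℂ) * f ^ 3 * (v : ℂ) ^ 2 + (16128000 : ℂ) * f ^ 4 * (v : ℂ) ^ 2 + ((-16708985 : ℂ) / 2) * f ^ 4 * (v : ℂ) ^ 4 + (-17942400 : ℂ) * f ^ 5 * (v : ℂ) ^ 2 + (12431074 : ℂ) * f ^ 5 * (v : ℂ) ^ 4 + (9072000 : ℂ) * f ^ 6 * (v : ℂ) ^ 2 + (16128000 : ℂ) * e ^ 1 * (v : ℂ) ^ 2 + (-183628770 : ℂ) * e ^ 1 * (v : ℂ) ^ 4 + (-32256000 : ℂ) * e ^ 1 * f ^ 1 * (v : ℂ) ^ 2 + (24192000 : ℂ) * e ^ 1 * f ^ 2 * (v : ℂ) ^ 2 + (-8064000 : ℂ) * e ^ 1 * f ^ 3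 * (v : ℂ) ^ 2 + (1008000 : ℂ) * e ^ 1 * f ^ 4 * (v : ℂ) ^ 2 + (-16128000 : ℂ) * e ^ 2 * (v : ℂ) ^ 2 + (91783950 : ℂ) * e ^ 2 * (v : ℂ) ^ 4 + (24192000 : ℂ) * e ^ 2 * f ^ 1 * (v : ℂ) ^ 2 + (-12096000 : ℂ) * e ^ 2 * f ^ 2 * (v : ℂ) ^ 2 + (2016000 : ℂ) * e ^ 2 * f ^ 3 * (v : ℂ) ^ 2 + (-1008000 : ℂ) * e ^ 3 * (v : ℂ) ^ 2 + (-8064000 : ℂ) * e ^ 3 * f ^ 1 * (v : ℂ) ^ 2 + (2016000 : ℂ) * e ^ 3 * f ^ 2 * (v : ℂ) ^ 2 + (16128000 : ℂ) * e ^ 4 * (v : ℂ) ^ 2 + ((-16708985 : ℂ) / 2) * e ^ 4 * (v : ℂ) ^ 4 + (1008000 : ℂ) * e ^ 4 * f ^ 1 * (v : ℂ) ^ 2 + (-17942400 : ℂ) * e ^ 5 * (v : ℂ) ^ 2 + (12431074 : ℂ) * e ^ 5 * (v : ℂ) ^ 4 + (9072000 : ℂ) * e ^ 6 * (v : ℂ)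 ^ 2 := by
    simp only [qtA, pfB, pfb3]
    push_cast [hcos1, hc2, hc3, hc4, hc5, hc6, hsin10']
    field_simp [hvne, hb2]
    ring
  have hC4 : ((qtA 4 : ℂ) + (v : ℂ) ^ 2 * (pfB 4 v : ℂ)) * ((206438400 : ℂ) * (v : ℂ) ^ 2 * ((2 - e - f) / 4) ^ 5) =
      (-171835152 : ℂ) * (v : ℂ) ^ 4 + (61351620 : ℂ) * f ^ 1 * (v : ℂ) ^ 4 + (24192000 : ℂ) * f ^ 3 * (v : ℂ) ^ 2 + (-91783950 : ℂ) * f ^ 3 * (v : ℂ) ^ 4 + (-48384000 : ℂ) * f ^ 4 * (v : ℂ) ^ 2 + (42675080 : ℂ) * f ^ 4 * (v : ℂ) ^ 4 + (48384000 : ℂ) * f ^ 5 * (v : ℂ) ^ 2 + (-35189174 : ℂ) * f ^ 5 * (v : ℂ) ^ 4 + (-24192000 : ℂ) * f ^ 6 * (v : ℂ) ^ 2 + (61351620 : ℂ) * e ^ 1 * (v : ℂ) ^ 4 + (24192000 : ℂ) * e ^ 3 * (v : ℂ) ^ 2 + (-91783950 : ℂ) * e ^ 3 * (v : ℂ) ^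 4 + (-48384000 : ℂ) * e ^ 4 * (v : ℂ) ^ 2 + (42675080 : ℂ) * e ^ 4 * (v : ℂ) ^ 4 + (48384000 : ℂ) * e ^ 5 * (v : ℂ) ^ 2 + (-35189174 : ℂ) * e ^ 5 * (v : ℂ) ^ 4 + (-24192000 : ℂ) * e ^ 6 * (v : ℂ) ^ 2 := by
    simp only [qtA, pfB, pfb4]
    push_cast [hcos1, hc2, hc3, hc4, hc5, hc6, hsin10']
    field_simp [hvne, hb2]
    ring
  have hC5 : ((qtA 5 : ℂ) + (v : ℂ) ^ 2 * (pfB 5 v : ℂ)) * ((206438400 : ℂ) * (v : ℂ) ^ 2 * ((2 - e - f) / 4) ^ 5) =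
      (171873114 : ℂ) * (v : ℂ) ^ 4 + (-61351620 : ℂ) * f ^ 2 * (v : ℂ) ^ 4 + (-42336000 : ℂ) * f ^ 3 * (v : ℂ) ^ 2 + (183628770 : ℂ) * f ^ 3 * (v : ℂ) ^ 4 + (84672000 : ℂ) * f ^ 4 * (v : ℂ) ^ 2 + (-79794025 : ℂ) * f ^ 4 * (v : ℂ) ^ 4 + (-84672000 : ℂ) * f ^ 5 * (v : ℂ) ^ 2 + (62092318 : ℂ) * f ^ 5 * (v : ℂ) ^ 4 + (42336000 : ℂ) * f ^ 6 * (v : ℂ) ^ 2 + (-61351620 : ℂ) * e ^ 2 * (v : ℂ) ^ 4 + (-42336000 : ℂ) * e ^ 3 * (v : ℂ) ^ 2 + (183628770 : ℂ) * e ^ 3 * (v : ℂ) ^ 4 + (84672000 : ℂ) * e ^ 4 * (v : ℂ) ^ 2 + (-79794025 : ℂ) * e ^ 4 * (v : ℂ) ^ 4 + (-84672000 : ℂ) * e ^ 5 * (v : ℂ) ^ 2 + (62092318 : ℂ) * e ^ 5 * (v : ℂ) ^ 4 + (42336000 : ℂ) * e ^ 6 * (v : ℂ) ^ 2 := by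
    simp only [qtA, pfB, pfb5]
    push_cast [hcos1, hc2, hc3, hc4, hc5, hc6, hsin10']
    field_simp [hvne, hb2]
    ring
  have hC6 : ((qtA 6 : ℂ) + (v : ℂ) ^ 2 * (pfB 6 v : ℂ)) * ((206438400 : ℂ) * (v : ℂ) ^ 2 * ((2 - e - f) / 4) ^ 5) =
      (-171873114 : ℂ) * f ^ 1 * (v : ℂ) ^ 4 + (171835152 : ℂ) * f ^ 2 * (v : ℂ) ^ 4 + (50803200 : ℂ) * f ^ 3 * (v : ℂ) ^ 2 + (-257184477 : ℂ) * f ^ 3 * (v : ℂ) ^ 4 + (-101606400 : ℂ) * f ^ 4 * (v : ℂ) ^ 2 + (103937264 : ℂ) * f ^ 4 * (v : ℂ) ^ 4 + (101606400 : ℂ) * f ^ 5 * (v : ℂ) ^ 2 + (-75329225 : ℂ) * f ^ 5 * (v : ℂ) ^ 4 + (-50803200 : ℂ) * f ^ 6 * (v : ℂ) ^ 2 + (-171873114 : ℂ) * e ^ 1 * (v : ℂ) ^ 4 + (171835152 : ℂ) * e ^ 2 * (v : ℂ) ^ 4 + (50803200 : ℂ) * e ^ 3 * (v : ℂ) ^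 2 + (-257184477 : ℂ) * e ^ 3 * (v : ℂ) ^ 4 + (-101606400 : ℂ) * e ^ 4 * (v : ℂ) ^ 2 + (103937264 : ℂ) * e ^ 4 * (v : ℂ) ^ 4 + (101606400 : ℂ) * e ^ 5 * (v : ℂ) ^ 2 + (-75329225 : ℂ) * e ^ 5 * (v : ℂ) ^ 4 + (-50803200 : ℂ) * e ^ 6 * (v : ℂ) ^ 2 := by
    simp only [qtA, pfB, pfb6]
    push_cast [hcos1, hc2, hc3, hc4, hc5, hc6, hsin10']
    field_simp [hvne, hb2]
    ring
  have hC7 : ((qtA 7 : ℂ) + (v : ℂ) ^ 2 * (pfB 7 v : ℂ)) * ((206438400 : ℂ) * (v : ℂ) ^ 2 * ((2 - e - f) / 4) ^ 5) =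
      (171873114 : ℂ) * (v : ℂ) ^ 4 + (-61351620 : ℂ) * f ^ 2 * (v : ℂ) ^ 4 + (-42336000 : ℂ) * f ^ 3 * (v : ℂ) ^ 2 + (183628770 : ℂ) * f ^ 3 * (v : ℂ) ^ 4 + (84672000 : ℂ) * f ^ 4 * (v : ℂ) ^ 2 + (-79794025 : ℂ) * f ^ 4 * (v : ℂ) ^ 4 + (-84672000 : ℂ) * f ^ 5 * (v : ℂ) ^ 2 + (62092318 : ℂ) * f ^ 5 * (v : ℂ) ^ 4 + (42336000 : ℂ) * f ^ 6 * (v : ℂ) ^ 2 + (-61351620 : ℂ) * e ^ 2 * (v : ℂ) ^ 4 + (-42336000 : ℂ) * e ^ 3 * (v : ℂ) ^ 2 + (183628770 : ℂ) * e ^ 3 * (v : ℂ) ^ 4 + (84672000 : ℂ) * e ^ 4 * (v : ℂ) ^ 2 + (-79794025 : ℂ) * e ^ 4 * (v : ℂ) ^ 4 + (-84672000 : ℂ) * e ^ 5 * (v : ℂ) ^ 2 + (62092318 : ℂ) * e ^ 5 * (v : ℂ) ^ 4 + (42336000 : ℂ) * e ^ 6 * (v : ℂ) ^ 2 := by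
    simp only [qtA, pfB, pfb5]
    push_cast [hcos1, hc2, hc3, hc4, hc5, hc6, hsin10']
    field_simp [hvne, hb2]
    ring
  have hC8 : ((qtA 8 : ℂ) + (v : ℂ) ^ 2 * (pfB 8 v : ℂ)) * ((206438400 : ℂ) * (v : ℂ) ^ 2 * ((2 - e - f) / 4) ^ 5) =
      (-171835152 : ℂ) * (v : ℂ) ^ 4 + (61351620 : ℂ) * f ^ 1 * (v : ℂ) ^ 4 + (24192000 : ℂ) * f ^ 3 * (v : ℂ) ^ 2 + (-91783950 : ℂ) * f ^ 3 * (v : ℂ) ^ 4 + (-48384000 : ℂ) * f ^ 4 * (v : ℂ) ^ 2 + (42675080 : ℂ) * f ^ 4 * (v : ℂ) ^ 4 + (48384000 : ℂ) * f ^ 5 * (v : ℂ) ^ 2 + (-35189174 : ℂ) * f ^ 5 * (v : ℂ) ^ 4 + (-24192000 : ℂ) * f ^ 6 * (v : ℂ) ^ 2 + (61351620 : ℂ) * e ^ 1 * (v : ℂ) ^ 4 + (24192000 : ℂ) * e ^ 3 * (v : ℂ) ^ 2 + (-91783950 : ℂ) * e ^ 3 * (v : ℂ) ^ 4 + (-48384000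 : ℂ) * e ^ 4 * (v : ℂ) ^ 2 + (42675080 : ℂ) * e ^ 4 * (v : ℂ) ^ 4 + (48384000 : ℂ) * e ^ 5 * (v : ℂ) ^ 2 + (-35189174 : ℂ) * e ^ 5 * (v : ℂ) ^ 4 + (-24192000 : ℂ) * e ^ 6 * (v : ℂ) ^ 2 := by
    simp only [qtA, pfB, pfb4]
    push_cast [hcos1, hc2, hc3, hc4, hc5, hc6, hsin10']
    field_simp [hvne, hb2]
    ring
  have hC9 : ((qtA 9 : ℂ) + (v : ℂ) ^ 2 * (pfB 9 v : ℂ)) * ((206438400 : ℂ) * (v : ℂ) ^ 2 * ((2 - e - f) / 4) ^ 5) =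
      (-6451200 : ℂ) * (v : ℂ) ^ 2 + (257184477 : ℂ) * (v : ℂ) ^ 4 + (16128000 : ℂ) * f ^ 1 * (v : ℂ) ^ 2 + (-183628770 : ℂ) * f ^ 1 * (v : ℂ) ^ 4 + (-16128000 : ℂ) * f ^ 2 * (v : ℂ) ^ 2 + (91783950 : ℂ) * f ^ 2 * (v : ℂ) ^ 4 + (-1008000 : ℂ) * f ^ 3 * (v : ℂ) ^ 2 + (16128000 : ℂ) * f ^ 4 * (v : ℂ) ^ 2 + ((-16708985 : ℂ) / 2) * f ^ 4 * (v : ℂ) ^ 4 + (-17942400 : ℂ) * f ^ 5 * (v : ℂ) ^ 2 + (12431074 : ℂ) * f ^ 5 * (v : ℂ) ^ 4 + (9072000 : ℂ) * f ^ 6 * (v : ℂ) ^ 2 + (16128000 : ℂ) * e ^ 1 * (v : ℂ) ^ 2 + (-183628770 : ℂ) * e ^ 1 * (v : ℂ) ^ 4 + (-32256000 : ℂ) * e ^ 1 * f ^ 1 * (v : ℂ) ^ 2 + (24192000 : ℂ) * e ^ 1 * f ^ 2 * (v : ℂ) ^ 2 + (-8064000 : ℂ) * e ^ 1 * f ^ 3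 * (v : ℂ) ^ 2 + (1008000 : ℂ) * e ^ 1 * f ^ 4 * (v : ℂ) ^ 2 + (-16128000 : ℂ) * e ^ 2 * (v : ℂ) ^ 2 + (91783950 : ℂ) * e ^ 2 * (v : ℂ) ^ 4 + (24192000 : ℂ) * e ^ 2 * f ^ 1 * (v : ℂ) ^ 2 + (-12096000 : ℂ) * e ^ 2 * f ^ 2 * (v : ℂ) ^ 2 + (2016000 : ℂ) * e ^ 2 * f ^ 3 * (v : ℂ) ^ 2 + (-1008000 : ℂ) * e ^ 3 * (v : ℂ) ^ 2 + (-8064000 : ℂ) * e ^ 3 * f ^ 1 * (v : ℂ) ^ 2 + (2016000 : ℂ) * e ^ 3 * f ^ 2 * (v : ℂ) ^ 2 + (16128000 : ℂ) * e ^ 4 * (v : ℂ) ^ 2 + ((-16708985 : ℂ) / 2) * e ^ 4 * (v : ℂ) ^ 4 + (1008000 : ℂ) * e ^ 4 * f ^ 1 * (v : ℂ) ^ 2 + (-17942400 : ℂ) * e ^ 5 * (v : ℂ) ^ 2 + (12431074 : ℂ) * e ^ 5 * (v : ℂ) ^ 4 + (9072000 : ℂ) * e ^ 6 * (v : ℂ)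 ^ 2 := by
    simp only [qtA, pfB, pfb3]
    push_cast [hcos1, hc2, hc3, hc4, hc5, hc6, hsin10']
    field_simp [hvne, hb2]
    ring
  have hC10 : ((qtA 10 : ℂ) + (v : ℂ) ^ 2 * (pfB 10 v : ℂ)) * ((206438400 : ℂ) * (v : ℂ) ^ 2 * ((2 - e - f) / 4) ^ 5) =
      (12902400 : ℂ) * (v : ℂ) ^ 2 + (-103937264 : ℂ) * (v : ℂ) ^ 4 + (-32256000 : ℂ) * f ^ 1 * (v : ℂ) ^ 2 + (79794025 : ℂ) * f ^ 1 * (v : ℂ) ^ 4 + (32256000 : ℂ) * f ^ 2 * (v : ℂ) ^ 2 + (-42675080 : ℂ) * f ^ 2 * (v : ℂ) ^ 4 + (-14112000 : ℂ) * f ^ 3 * (v : ℂ) ^ 2 + ((16708985 : ℂ) / 2) * f ^ 3 * (v : ℂ) ^ 4 + (3628800 : ℂ) * f ^ 5 * (v : ℂ) ^ 2 + ((-5153611 : ℂ) / 2) * f ^ 5 * (v : ℂ) ^ 4 + (-2016000 : ℂ) * f ^ 6 * (v : ℂ) ^ 2 + (-32256000 : ℂ) * e ^ 1 * (v : ℂ)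 ^ 2 + (79794025 : ℂ) * e ^ 1 * (v : ℂ) ^ 4 + (64512000 : ℂ) * e ^ 1 * f ^ 1 * (v : ℂ) ^ 2 + (-48384000 : ℂ) * e ^ 1 * f ^ 2 * (v : ℂ) ^ 2 + (16128000 : ℂ) * e ^ 1 * f ^ 3 * (v : ℂ) ^ 2 + (-2016000 : ℂ) * e ^ 1 * f ^ 4 * (v : ℂ) ^ 2 + (32256000 : ℂ) * e ^ 2 * (v : ℂ) ^ 2 + (-42675080 : ℂ) * e ^ 2 * (v : ℂ) ^ 4 + (-48384000 : ℂ) * e ^ 2 * f ^ 1 * (v : ℂ) ^ 2 + (24192000 : ℂ) * e ^ 2 * f ^ 2 * (v : ℂ) ^ 2 + (-4032000 : ℂ) * e ^ 2 * f ^ 3 * (v : ℂ) ^ 2 + (-14112000 : ℂ) * e ^ 3 * (v : ℂ) ^ 2 + ((16708985 : ℂ) / 2) * e ^ 3 * (v : ℂ) ^ 4 + (16128000 : ℂ) * e ^ 3 * f ^ 1 * (v : ℂ) ^ 2 + (-4032000 : ℂ) * e ^ 3 * f ^ 2 * (v : ℂ) ^ 2 + (-2016000 : ℂ) * e ^ 4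 * f ^ 1 * (v : ℂ) ^ 2 + (3628800 : ℂ) * e ^ 5 * (v : ℂ) ^ 2 + ((-5153611 : ℂ) / 2) * e ^ 5 * (v : ℂ) ^ 4 + (-2016000 : ℂ) * e ^ 6 * (v : ℂ) ^ 2 := by
    simp only [qtA, pfB, pfb2]
    push_cast [hcos1, hc2, hc3, hc4, hc5, hc6, hsin10']
    field_simp [hvne, hb2]
    ring
  have hC11 : ((qtA 11 : ℂ) + (v : ℂ) ^ 2 * (pfB 11 v : ℂ)) * ((206438400 : ℂ) * (v : ℂ) ^ 2 * ((2 - e - f) / 4) ^ 5) =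
      (-12902400 : ℂ) * (v : ℂ) ^ 2 + (75329225 : ℂ) * (v : ℂ) ^ 4 + (32256000 : ℂ) * f ^ 1 * (v : ℂ) ^ 2 + (-62092318 : ℂ) * f ^ 1 * (v : ℂ) ^ 4 + (-32256000 : ℂ) * f ^ 2 * (v : ℂ) ^ 2 + (35189174 : ℂ) * f ^ 2 * (v : ℂ) ^ 4 + (15926400 : ℂ) * f ^ 3 * (v : ℂ) ^ 2 + (-12431074 : ℂ) * f ^ 3 * (v : ℂ) ^ 4 + (-3628800 : ℂ) * f ^ 4 * (v : ℂ) ^ 2 + ((5153611 : ℂ) / 2) * f ^ 4 * (v : ℂ) ^ 4 + (201600 : ℂ) * f ^ 6 * (v : ℂ) ^ 2 + (32256000 : ℂ) * e ^ 1 * (v : ℂ) ^ 2 + (-62092318 : ℂ) * e ^ 1 * (v : ℂ) ^ 4 + (-64512000 : ℂ) * e ^ 1 * f ^ 1 * (v : ℂ) ^ 2 + (48384000 : ℂ) * e ^ 1 * f ^ 2 * (v : ℂ) ^ 2 + (-16128000 : ℂ) * e ^ 1 * f ^ 3 * (v : ℂ) ^ 2 + (2016000 : ℂ) * e ^ 1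 * f ^ 4 * (v : ℂ) ^ 2 + (-32256000 : ℂ) * e ^ 2 * (v : ℂ) ^ 2 + (35189174 : ℂ) * e ^ 2 * (v : ℂ) ^ 4 + (48384000 : ℂ) * e ^ 2 * f ^ 1 * (v : ℂ) ^ 2 + (-24192000 : ℂ) * e ^ 2 * f ^ 2 * (v : ℂ) ^ 2 + (4032000 : ℂ) * e ^ 2 * f ^ 3 * (v : ℂ) ^ 2 + (15926400 : ℂ) * e ^ 3 * (v : ℂ) ^ 2 + (-12431074 : ℂ) * e ^ 3 * (v : ℂ) ^ 4 + (-16128000 : ℂ) * e ^ 3 * f ^ 1 * (v : ℂ) ^ 2 + (4032000 : ℂ) * e ^ 3 * f ^ 2 * (v : ℂ) ^ 2 + (-3628800 : ℂ) * e ^ 4 * (v : ℂ) ^ 2 + ((5153611 : ℂ) / 2) * e ^ 4 * (v : ℂ) ^ 4 + (2016000 : ℂ) * e ^ 4 * f ^ 1 * (v : ℂ) ^ 2 + (201600 : ℂ) * e ^ 6 * (v : ℂ) ^ 2 := by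
    simp only [qtA, pfB, pfb1]
    push_cast [hcos1, hc2, hc3, hc4, hc5, hc6, hsin10']
    field_simp [hvne, hb2]
    ring
  have hC12 : ((qtA 12 : ℂ) + (v : ℂ) ^ 2 * (pfB 12 v : ℂ)) * ((206438400 : ℂ) * (v : ℂ) ^ 2 * ((2 - e - f) / 4) ^ 5) =
      (6451200 : ℂ) * (v : ℂ) ^ 2 + (-16128000 : ℂ) * f ^ 1 * (v : ℂ) ^ 2 + (16128000 : ℂ) * f ^ 2 * (v : ℂ) ^ 2 + (-8064000 : ℂ) * f ^ 3 * (v : ℂ) ^ 2 + (2016000 : ℂ) * f ^ 4 * (v : ℂ) ^ 2 + (-201600 : ℂ) * f ^ 5 * (v : ℂ) ^ 2 + (-16128000 : ℂ) * e ^ 1 * (v : ℂ) ^ 2 + (32256000 : ℂ) * e ^ 1 * f ^ 1 * (v : ℂ) ^ 2 + (-24192000 : ℂ) * e ^ 1 * f ^ 2 * (v : ℂ) ^ 2 + (8064000 : ℂ) * e ^ 1 * f ^ 3 * (v : ℂ) ^ 2 + (-1008000 : ℂ) * e ^ 1 * f ^ 4 * (v : ℂ) ^ 2 + (16128000 : ℂ)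 * e ^ 2 * (v : ℂ) ^ 2 + (-24192000 : ℂ) * e ^ 2 * f ^ 1 * (v : ℂ) ^ 2 + (12096000 : ℂ) * e ^ 2 * f ^ 2 * (v : ℂ) ^ 2 + (-2016000 : ℂ) * e ^ 2 * f ^ 3 * (v : ℂ) ^ 2 + (-8064000 : ℂ) * e ^ 3 * (v : ℂ) ^ 2 + (8064000 : ℂ) * e ^ 3 * f ^ 1 * (v : ℂ) ^ 2 + (-2016000 : ℂ) * e ^ 3 * f ^ 2 * (v : ℂ) ^ 2 + (2016000 : ℂ) * e ^ 4 * (v : ℂ) ^ 2 + (-1008000 : ℂ) * e ^ 4 * f ^ 1 * (v : ℂ) ^ 2 + (-201600 : ℂ) * e ^ 5 * (v : ℂ) ^ 2 := by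
    simp only [qtA, pfB]
    push_cast
    ring
  have hDne : (206438400 : ℂ) * (v : ℂ) ^ 2 * ((2 - e - f) / 4) ^ 5 ≠ 0 := by
    apply mul_ne_zero (mul_ne_zero (by norm_num) (pow_ne_zero 2 hvne))
    exact pow_ne_zero 5 hbne
  have h2 : (∑ j ∈ range 13, ((qtA j : ℂ) + (v : ℂ) ^ 2 * (pfB j v : ℂ))
        * Complex.exp (Complex.I * (j : ℂ) * (v : ℂ))) * ((206438400 : ℂ) * (v : ℂ) ^ 2 * ((2 - e - f) / 4) ^ 5) = 0 := by
    simp only [Finset.sum_range_succ, Finset.sum_range_zero, hexp]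
    linear_combination e ^ 0 * hC0 + e ^ 1 * hC1 + e ^ 2 * hC2 + e ^ 3 * hC3 + e ^ 4 * hC4 + e ^ 5 * hC5 + e ^ 6 * hC6 + e ^ 7 * hC7 + e ^ 8 * hC8 + e ^ 9 * hC9 + e ^ 10 * hC10 + e ^ 11 * hC11 + e ^ 12 * hC12 + ((-6451200 : ℂ) * (v : ℂ) ^ 2 + (16128000 : ℂ) * f ^ 1 * (v : ℂ) ^ 2 + (-16128000 : ℂ) * f ^ 2 * (v : ℂ) ^ 2 + (8064000 : ℂ) * f ^ 3 * (v : ℂ) ^ 2 + (-2016000 : ℂ) * f ^ 4 * (v : ℂ) ^ 2 + (201600 : ℂ) * f ^ 5 * (v : ℂ) ^ 2 + (29030400 : ℂ) * e ^ 1 * (v : ℂ) ^ 2 + (-75329225 : ℂ) * e ^ 1 * (v : ℂ) ^ 4 + (-70963200 : ℂ) * e ^ 1 * f ^ 1 * (v : ℂ) ^ 2 + (62092318 : ℂ) * e ^ 1 * f ^ 1 * (v : ℂ) ^ 4 + (72576000 : ℂ) * e ^ 1 * f ^ 2 * (v : ℂ) ^ 2 + (-35189174 : ℂ) * e ^ 1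 * f ^ 2 * (v : ℂ) ^ 4 + (-40118400 : ℂ) * e ^ 1 * f ^ 3 * (v : ℂ) ^ 2 + (12431074 : ℂ) * e ^ 1 * f ^ 3 * (v : ℂ) ^ 4 + (12700800 : ℂ) * e ^ 1 * f ^ 4 * (v : ℂ) ^ 2 + ((-5153611 : ℂ) / 2) * e ^ 1 * f ^ 4 * (v : ℂ) ^ 4 + (-2016000 : ℂ) * e ^ 1 * f ^ 5 * (v : ℂ) ^ 2 + (-61286400 : ℂ) * e ^ 2 * (v : ℂ) ^ 2 + (166029582 : ℂ) * e ^ 2 * (v : ℂ) ^ 4 + (149990400 : ℂ) * e ^ 2 * f ^ 1 * (v : ℂ) ^ 2 + (-155123250 : ℂ) * e ^ 2 * f ^ 1 * (v : ℂ) ^ 4 + (-163699200 : ℂ) * e ^ 2 * f ^ 2 * (v : ℂ) ^ 2 + (104767398 : ℂ) * e ^ 2 * f ^ 2 * (v : ℂ) ^ 4 + (104832000 : ℂ) * e ^ 2 * f ^ 3 * (v : ℂ) ^ 2 + ((-87087333 : ℂ) / 2) * e ^ 2 * f ^ 3 * (v : ℂ) ^ 4 + (-42134400 : ℂ) * e ^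 2 * f ^ 4 * (v : ℂ) ^ 2 + (12431074 : ℂ) * e ^ 2 * f ^ 4 * (v : ℂ) ^ 4 + (9072000 : ℂ) * e ^ 2 * f ^ 5 * (v : ℂ) ^ 2 + (79027200 : ℂ) * e ^ 3 * (v : ℂ) ^ 2 + (-372167676 : ℂ) * e ^ 3 * (v : ℂ) ^ 4 + (-198374400 : ℂ) * e ^ 3 * f ^ 1 * (v : ℂ) ^ 2 + (349658352 : ℂ) * e ^ 3 * f ^ 1 * (v : ℂ) ^ 4 + (240710400 : ℂ) * e ^ 3 * f ^ 2 * (v : ℂ) ^ 2 + (-246907200 : ℂ) * e ^ 3 * f ^ 2 * (v : ℂ) ^ 4 + (-182851200 : ℂ) * e ^ 3 * f ^ 3 * (v : ℂ) ^ 2 + (104767398 : ℂ) * e ^ 3 * f ^ 3 * (v : ℂ) ^ 4 + (90720000 : ℂ) * e ^ 3 * f ^ 4 * (v : ℂ) ^ 2 + (-35189174 : ℂ) * e ^ 3 * f ^ 4 * (v : ℂ) ^ 4 + (-24192000 : ℂ) * e ^ 3 * f ^ 5 * (v : ℂ) ^ 2 + (-66326400 : ℂ) * e ^ 4 * (v :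 ℂ) ^ 2 + (410570076 : ℂ) * e ^ 4 * (v : ℂ) ^ 4 + (176803200 : ℂ) * e ^ 4 * f ^ 1 * (v : ℂ) ^ 2 + (-433519296 : ℂ) * e ^ 4 * f ^ 1 * (v : ℂ) ^ 4 + (-250790400 : ℂ) * e ^ 4 * f ^ 2 * (v : ℂ) ^ 2 + (349658352 : ℂ) * e ^ 4 * f ^ 2 * (v : ℂ) ^ 4 + (228614400 : ℂ) * e ^ 4 * f ^ 3 * (v : ℂ) ^ 2 + (-155123250 : ℂ) * e ^ 4 * f ^ 3 * (v : ℂ) ^ 4 + (-135475200 : ℂ) * e ^ 4 * f ^ 4 * (v : ℂ) ^ 2 + (62092318 : ℂ) * e ^ 4 * f ^ 4 * (v : ℂ) ^ 4 + (42336000 : ℂ) * e ^ 4 * f ^ 5 * (v : ℂ) ^ 2 + (34070400 : ℂ) * e ^ 5 * (v : ℂ) ^ 2 + (-335939982 : ℂ) * e ^ 5 * (v : ℂ) ^ 4 + (-108662400 : ℂ) * e ^ 5 * f ^ 1 * (v : ℂ) ^ 2 + (410570076 : ℂ) * e ^ 5 * f ^ 1 * (v : ℂ) ^ 4 + (192931200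 : ℂ) * e ^ 5 * f ^ 2 * (v : ℂ) ^ 2 + (-372167676 : ℂ) * e ^ 5 * f ^ 2 * (v : ℂ) ^ 4 + (-210470400 : ℂ) * e ^ 5 * f ^ 3 * (v : ℂ) ^ 2 + (166029582 : ℂ) * e ^ 5 * f ^ 3 * (v : ℂ) ^ 4 + (143942400 : ℂ) * e ^ 5 * f ^ 4 * (v : ℂ) ^ 2 + (-75329225 : ℂ) * e ^ 5 * f ^ 4 * (v : ℂ) ^ 4 + (-50803200 : ℂ) * e ^ 5 * f ^ 5 * (v : ℂ) ^ 2 + (1008000 : ℂ) * e ^ 6 * (v : ℂ) ^ 2 + (44150400 : ℂ) * e ^ 6 * f ^ 1 * (v : ℂ) ^ 2 + (-164066868 : ℂ) * e ^ 6 * f ^ 1 * (v : ℂ) ^ 4 + (-110678400 : ℂ) * e ^ 6 * f ^ 2 * (v : ℂ) ^ 2 + (238734924 : ℂ) * e ^ 6 * f ^ 2 * (v : ℂ) ^ 4 + (142128000 : ℂ) * e ^ 6 * f ^ 3 * (v : ℂ) ^ 2 + (-114983199 : ℂ) * e ^ 6 * f ^ 3 * (v : ℂ) ^ 4 + (-108864000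 : ℂ) * e ^ 6 * f ^ 4 * (v : ℂ) ^ 2 + (62092318 : ℂ) * e ^ 6 * f ^ 4 * (v : ℂ) ^ 4 + (42336000 : ℂ) * e ^ 6 * f ^ 5 * (v : ℂ) ^ 2 + (-44150400 : ℂ) * e ^ 7 * (v : ℂ) ^ 2 + (164066868 : ℂ) * e ^ 7 * (v : ℂ) ^ 4 + (44150400 : ℂ) * e ^ 7 * f ^ 2 * (v : ℂ) ^ 2 + (-102715248 : ℂ) * e ^ 7 * f ^ 2 * (v : ℂ) ^ 4 + (-68342400 : ℂ) * e ^ 7 * f ^ 3 * (v : ℂ) ^ 2 + (55106154 : ℂ) * e ^ 7 * f ^ 3 * (v : ℂ) ^ 4 + (57456000 : ℂ) * e ^ 7 * f ^ 4 * (v : ℂ) ^ 2 + (-35189174 : ℂ) * e ^ 7 * f ^ 4 * (v : ℂ) ^ 4 + (-24192000 : ℂ) * e ^ 7 * f ^ 5 * (v : ℂ) ^ 2 + (110678400 : ℂ) * e ^ 8 * (v : ℂ) ^ 2 + (-238734924 : ℂ) * e ^ 8 * (v : ℂ) ^ 4 + (-44150400 : ℂ) * e ^ 8 * f ^ 1 *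 (v : ℂ) ^ 2 + (102715248 : ℂ) * e ^ 8 * f ^ 1 * (v : ℂ) ^ 4 + (19958400 : ℂ) * e ^ 8 * f ^ 3 * (v : ℂ) ^ 2 + (-10931298 : ℂ) * e ^ 8 * f ^ 3 * (v : ℂ) ^ 4 + (-19958400 : ℂ) * e ^ 8 * f ^ 4 * (v : ℂ) ^ 2 + (12431074 : ℂ) * e ^ 8 * f ^ 4 * (v : ℂ) ^ 4 + (9072000 : ℂ) * e ^ 8 * f ^ 5 * (v : ℂ) ^ 2 + (-186480000 : ℂ) * e ^ 9 * (v : ℂ) ^ 2 + (114983199 : ℂ) * e ^ 9 * (v : ℂ) ^ 4 + (94550400 : ℂ) * e ^ 9 * f ^ 1 * (v : ℂ) ^ 2 + (-55106154 : ℂ) * e ^ 9 * f ^ 1 * (v : ℂ) ^ 4 + (-28022400 : ℂ) * e ^ 9 * f ^ 2 * (v : ℂ) ^ 2 + (10931298 : ℂ) * e ^ 9 * f ^ 2 * (v : ℂ) ^ 4 + (1008000 : ℂ) * e ^ 9 * f ^ 3 * (v : ℂ) ^ 2 + (3830400 : ℂ) * e ^ 9 * f ^ 4 * (v : ℂ)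 ^ 2 + ((-5153611 : ℂ) / 2) * e ^ 9 * f ^ 4 * (v : ℂ) ^ 4 + (-2016000 : ℂ) * e ^ 9 * f ^ 5 * (v : ℂ) ^ 2 + (223776000 : ℂ) * e ^ 10 * (v : ℂ) ^ 2 + (-62092318 : ℂ) * e ^ 10 * (v : ℂ) ^ 4 + (-121968000 : ℂ) * e ^ 10 * f ^ 1 * (v : ℂ) ^ 2 + (35189174 : ℂ) * e ^ 10 * f ^ 1 * (v : ℂ) ^ 4 + (38102400 : ℂ) * e ^ 10 * f ^ 2 * (v : ℂ) ^ 2 + (-12431074 : ℂ) * e ^ 10 * f ^ 2 * (v : ℂ) ^ 4 + (-5846400 : ℂ) * e ^ 10 * f ^ 3 * (v : ℂ) ^ 2 + ((5153611 : ℂ) / 2) * e ^ 10 * f ^ 3 * (v : ℂ) ^ 4 + (201600 : ℂ) * e ^ 10 * f ^ 5 * (v : ℂ) ^ 2 + (-191520000 : ℂ) * e ^ 11 * (v : ℂ) ^ 2 + (102816000 : ℂ) * e ^ 11 * f ^ 1 * (v : ℂ) ^ 2 + (-29232000 : ℂ) * e ^ 11 * f ^ 2 * (v : ℂ) ^ 2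 + (4032000 : ℂ) * e ^ 11 * f ^ 3 * (v : ℂ) ^ 2 + (-201600 : ℂ) * e ^ 11 * f ^ 4 * (v : ℂ) ^ 2 + (113904000 : ℂ) * e ^ 12 * (v : ℂ) ^ 2 + (-54432000 : ℂ) * e ^ 12 * f ^ 1 * (v : ℂ) ^ 2 + (12096000 : ℂ) * e ^ 12 * f ^ 2 * (v : ℂ) ^ 2 + (-1008000 : ℂ) * e ^ 12 * f ^ 3 * (v : ℂ) ^ 2 + (-44352000 : ℂ) * e ^ 13 * (v : ℂ) ^ 2 + (16128000 : ℂ) * e ^ 13 * f ^ 1 * (v : ℂ) ^ 2 + (-2016000 : ℂ) * e ^ 13 * f ^ 2 * (v : ℂ) ^ 2 + (10080000 : ℂ) * e ^ 14 * (v : ℂ) ^ 2 + (-2016000 : ℂ) * e ^ 14 * f ^ 1 * (v : ℂ) ^ 2 + (-1008000 : ℂ) * e ^ 15 * (v : ℂ) ^ 2) * hef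
  exact (mul_eq_zero.mp h2).resolve_right hDne
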